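/- arXiv:2507.10909 — 2 statements merged into one kernel-verified Lean document; each statement's English description precedes it below -/
import Mathlib

section
/- Let G be a topological gyrogroup. Then the connected component of the identity element is an L-subgyrogroup of G. -/
open Set Topology

universe u

class Gyrogroup (G : Type u) where
  op : G → G → G
  one : G
  inv : G → G
  gyr : G → G → G ≃ G
  one_op : ∀ g, op one g = g
  op_one : ∀ g, op g one = g
  inv_op : ∀ g, op (inv g) g = one
  op_inv : ∀ g, op g (inv g) = one
  unique_one : ∀ e : G, (∀ g, op e g = g ∧ op g e = g) → e = one
  unique_inv : ∀ g h : G, (op h g = one ∧ op g h = one) → h = inv g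
  gyr_op : ∀ g h f, op g (op h f) = op (op g h) (gyr g h f)
  gyr_hom : ∀ g h a b, gyr g h (op a b) = op (gyr g h a) (gyr g h b)
  loop : ∀ g h, gyr g h = gyr (op g h) h

namespace Gyrogroup

variable {G : Type u} [Gyrogroup G]

/-- `H` is a subgyrogroup: nonempty and a gyrogroup under the restricted operations. -/
def IsSubgyrogroup (H : Set G) : Prop :=
  H.Nonempty ∧ one ∈ H ∧
  (∀ a ∈ H, ∀ b ∈ H, op a b ∈ H) ∧
  (∀ a ∈ H, inv a ∈ H) ∧
  (∀ a ∈ H, ∀ b ∈ H, Set.BijOn (gyr a b) H H)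

/-- `H` is an L-subgyrogroup: `gyr g h` fixes `H` setwise for every `g ∈ G`, `h ∈ H`. -/
def IsLSubgyrogroup (H : Set G) : Prop :=
  IsSubgyrogroup H ∧ ∀ g : G, ∀ h ∈ H, (gyr g h) '' H = H

def leftCoset (a : G) (H : Set G) : Set G := (fun h => op a h) '' H

/-- The subgyrogroup generated by `S`. -/
def generatedSubgyrogroup (S : Set G) : Set G :=
  ⋂₀ {H : Set G | IsSubgyrogroup H ∧ S ⊆ H}

/-- The gyrogroup operations are continuous (topological gyrogroup). -/
def ContinuousGyroOps (G : Type u) [Gyrogroup G] [TopologicalSpace G] : Prop :=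
  Continuous (fun p : G × G => op p.1 p.2) ∧ Continuous (inv : G → G)

/-- The topology coincides with the order topology of some linear order. -/
def TopologicallyOrderable (G : Type u) [t : TopologicalSpace G] : Prop :=
  ∃ l : LinearOrder G, t = TopologicalSpace.generateFrom
      {s : Set G | ∃ a : G, s = {x | l.lt a x} ∨ s = {x | l.lt x a}}

/-- A strongly topological gyrogroup: a topological gyrogroup with a neighborhood base
at `1` whose members are invariant under all gyroautomorphisms. -/
def StronglyTopologicalGyrogroup (G : Type u) [Gyrogroup G] [TopologicalSpace G] : Prop :=
  ContinuousGyroOps G ∧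
  ∃ 𝒰 : Set (Set G), (∀ U ∈ 𝒰, U ∈ nhds (one : G)) ∧
    (∀ V ∈ nhds (one : G), ∃ U ∈ 𝒰, U ⊆ V) ∧
    (∀ U ∈ 𝒰, ∀ x y : G, (gyr x y) '' U = U)

def StronglyTopologicallyOrderable (G : Type u) [Gyrogroup G] [TopologicalSpace G] : Prop :=
  StronglyTopologicalGyrogroup G ∧ TopologicallyOrderable G

end Gyrogroup

open Gyrogroup

namespace GyroAux

open Gyrogroup

variable {G : Type u} [Gyrogroup G]

lemma op_left_eq (a x : G) : op (inv a) (op a x) = gyr (inv a) a x := by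
  rw [gyr_op, inv_op, one_op]

lemma op_left_inj (a : G) : Function.Injective (fun x : G => op a x) := by
  intro x y h
  have h2 : gyr (inv a) a x = gyr (inv a) a y := by
    rw [← op_left_eq, ← op_left_eq]
    exact congrArg (fun z => op (inv a) z) h
  exact (gyr (inv a) a).injective h2

lemma gyr_one_left (h : G) : gyr (one : G) h = Equiv.refl G := by
  ext f
  have := gyr_op (one : G) h f
  rw [one_op, one_op] at this
  exact (op_left_inj h this).symm

lemma left_cancel (a x : G) : op (inv a) (op a x) = x := by
  rw [op_left_eq, loop, inv_op, gyr_one_left]; rfl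

lemma inv_inv (a : G) : inv (inv a) = a :=
  (unique_inv (inv a) a ⟨op_inv a, inv_op a⟩).symm

lemma left_cancel' (a x : G) : op a (op (inv a) x) = x := by
  have := left_cancel (inv a) x
  rwa [inv_inv] at this

lemma inv_one : (inv (one : G)) = one :=
  (unique_inv one one ⟨op_one one, op_one one⟩).symm

lemma gyr_one (g h : G) : gyr g h (one : G) = one := by
  have := gyr_hom g h (one : G) one
  rw [one_op] at this
  have h2 : op (inv (gyr g h one)) (op (gyr g h one) (gyr g h one))
      = op (inv (gyr g h one)) (gyr g h one) := by rw [← this]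
  rw [left_cancel, inv_op] at h2
  exact h2

lemma gyr_eq (g h f : G) : gyr g h f = op (inv (op g h)) (op g (op h f)) := by
  rw [gyr_op g h f, left_cancel]

lemma gyr_symm_eq (g h x : G) :
    (gyr g h).symm x = op (inv h) (op (inv g) (op (op g h) x)) := by
  rw [Equiv.symm_apply_eq, gyr_eq, left_cancel', left_cancel', left_cancel]

end GyroAux

/-- The connected component of the identity of a topological gyrogroup is an
L-subgyrogroup. -/
theorem stmt4 {G : Type u} [Gyrogroup G] [TopologicalSpace G]
    (hc : ContinuousGyroOps G) :
    IsLSubgyrogroup (connectedComponent (one : G)) := by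
  have hop : Continuous (fun p : G × G => op p.1 p.2) := hc.1
  have hinv : Continuous (inv : G → G) := hc.2
  have hL : ∀ a : G, Continuous (fun x : G => op a x) := fun a =>
    hop.comp (continuous_const.prodMk continuous_id)
  -- key: a continuous map fixing `one` maps the component into itself
  have key : ∀ f : G → G, Continuous f → f one = one →
      f '' connectedComponent (one : G) ⊆ connectedComponent (one : G) := by
    intro f hf h1
    have := hf.image_connectedComponent_subset (one : G)
    rwa [h1] at this
  have hone : (one : G) ∈ connectedComponent (one : G) := mem_connectedComponent
  -- closure under op
  have hopmem : ∀ a ∈ connectedComponent (one : G), ∀ b ∈ connectedComponent (one : G),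
      op a b ∈ connectedComponent (one : G) := by
    intro a ha b hb
    have h1 : (fun x : G => op a x) '' connectedComponent (one : G) ⊆
        connectedComponent (op a one) := (hL a).image_connectedComponent_subset one
    rw [op_one, ← connectedComponent_eq ha] at h1
    exact h1 ⟨b, hb, rfl⟩
  -- closure under gyr : both directions
  have hgyr_cont : ∀ g h : G, Continuous (fun x : G => gyr g h x) := by
    intro g h
    have : (fun x : G => gyr g h x)
        = fun x : G => op (inv (op g h)) (op g (op h x)) := by
      funext x; exact GyroAux.gyr_eq g h x
    rw [this]
    exact (hL _).comp ((hL g).comp (hL h))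
  have hgyr_symm_cont : ∀ g h : G, Continuous (fun x : G => (gyr g h).symm x) := by
    intro g h
    have : (fun x : G => (gyr g h).symm x)
        = fun x : G => op (inv h) (op (inv g) (op (op g h) x)) := by
      funext x; exact GyroAux.gyr_symm_eq g h x
    rw [this]
    exact (hL _).comp ((hL _).comp (hL _))
  have hgyr_img : ∀ g h : G,
      (gyr g h) '' connectedComponent (one : G) = connectedComponent (one : G) := by
    intro g h
    apply Set.Subset.antisymm
    · exact key _ (hgyr_cont g h) (GyroAux.gyr_one g h)
    · intro x hx
      have hsymm1 : (gyr g h).symm (one : G) = one := by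
        rw [Equiv.symm_apply_eq, GyroAux.gyr_one]
      have := key _ (hgyr_symm_cont g h) hsymm1 ⟨x, hx, rfl⟩
      exact ⟨(gyr g h).symm x, this, (gyr g h).apply_symm_apply x⟩
  refine ⟨⟨⟨one, hone⟩, hone, hopmem, ?_, ?_⟩, fun g h _ => hgyr_img g h⟩
  · intro a ha
    have h1 : (inv : G → G) '' connectedComponent (one : G) ⊆
        connectedComponent (one : G) := key _ hinv GyroAux.inv_one
    exact h1 ⟨a, ha, rfl⟩
  · intro a _ b _
    refine ⟨fun x hx => ?_, (gyr a b).injective.injOn, fun x hx => ?_⟩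
    · have := hgyr_img a b
      rw [← this]; exact ⟨x, hx, rfl⟩
    · rw [← hgyr_img a b] at hx
      obtain ⟨y, hy, hyx⟩ := hx
      exact ⟨y, hy, hyx⟩
end

section
/- Let G be a strongly topologically orderable gyrogroup. Then there is a totally ordered (by inclusion) local base 𝒱 at the identity consisting of symmetric neighborhoods W (i.e., ⊖W = W) such that gyr[x,y](W) = W for all x, y ∈ G and W ∈ 𝒱. -/
open Set Topology

universe u

open Gyrogroup

namespace Gyrogroup

variable {G : Type u} [Gyrogroup G]

theorem l_cancel (a : G) {x y : G} (h : op a x = op a y) : x = y := by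
  have hx : op (inv a) (op a x) = gyr (inv a) a x := by
    rw [gyr_op, inv_op, one_op]
  have hy : op (inv a) (op a y) = gyr (inv a) a y := by
    rw [gyr_op, inv_op, one_op]
  have : gyr (inv a) a x = gyr (inv a) a y := by rw [← hx, ← hy, h]
  exact (gyr (inv a) a).injective this

theorem gyr_one (x y : G) : gyr x y one = one := by
  have h1 : gyr x y (one : G) = op (gyr x y one) (gyr x y one) := by
    rw [← gyr_hom, one_op]
  have h2 : op (gyr x y (one : G)) one = gyr x y one := op_one _
  exact (l_cancel (gyr x y (one : G)) (by rw [← h1, h2])).symm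

theorem inv_one : (inv (one : G)) = one :=
  (unique_inv one one ⟨one_op one, one_op one⟩).symm

theorem inv_inv (a : G) : inv (inv a) = a :=
  (unique_inv (inv a) a ⟨op_inv a, inv_op a⟩).symm

theorem gyr_inv (x y a : G) : gyr x y (inv a) = inv (gyr x y a) :=
  unique_inv _ _ ⟨by rw [← gyr_hom, inv_op, gyr_one], by rw [← gyr_hom, op_inv, gyr_one]⟩

theorem inv_image_eq_preimage (U : Set G) : (inv : G → G) '' U = (inv : G → G) ⁻¹' U := by
  ext x
  constructor
  · rintro ⟨u, hu, rfl⟩; simpa [inv_inv] using hu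
  · intro hx; exact ⟨inv x, hx, inv_inv x⟩

theorem gyr_image_inv (x y : G) (U : Set G) :
    gyr x y '' ((inv : G → G) '' U) = (inv : G → G) '' (gyr x y '' U) := by
  rw [← Set.image_comp, ← Set.image_comp]
  exact Set.image_congr' (fun a => gyr_inv x y a)


end Gyrogroup

namespace GyroChainAux

open Cardinal

theorem hard_case {G : Type u} [LinearOrder G] [TopologicalSpace G] [OrderTopology G]
    (one : G) (op : G → G → G)
    (Hyp1 : ∀ a, a < one → ∀ b0, one < b0 → ∃ q, one < q ∧ ∀ b, one < b → b < q → op a b < one)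
    (Hyp2 : ∀ b, one < b → ∀ a0, a0 < one → ∃ p, p < one ∧ ∀ a, p < a → a < one → one < op a b)
    (a₀ : G) (ha₀ : a₀ < one) (b₀ : G) (hb₀ : one < b₀)
    (hAmax : ∀ a0, a0 < one → ∃ y, y < one ∧ a0 < y)
    (hBmin : ∀ b0, one < b0 → ∃ y, one < y ∧ y < b0) :
    ∃ ℬ : Set (Set G), (∀ I ∈ ℬ, I ∈ nhds one) ∧ (∀ V ∈ nhds one, ∃ I ∈ ℬ, I ⊆ V) ∧
      (∀ I ∈ ℬ, ∀ J ∈ ℬ, I ⊆ J ∨ J ⊆ I) := by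
  classical
  -- the collection of cardinalities of cofinal subsets of `Iio one`
  set CA : Set Cardinal.{u} :=
    {c | ∃ S : Set G, (S ⊆ Iio one ∧ ∀ x, x < one → ∃ s ∈ S, x ≤ s) ∧ #S = c} with hCA
  set CB : Set Cardinal.{u} :=
    {c | ∃ T : Set G, (T ⊆ Ioi one ∧ ∀ x, one < x → ∃ t ∈ T, t ≤ x) ∧ #T = c} with hCB
  have hCAne : CA.Nonempty :=
    ⟨#(Iio one), Iio one, ⟨subset_rfl, fun x hx => ⟨x, hx, le_rfl⟩⟩, rfl⟩
  have hCBne : CB.Nonempty :=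
    ⟨#(Ioi one), Ioi one, ⟨subset_rfl, fun x hx => ⟨x, hx, le_rfl⟩⟩, rfl⟩
  set κ := sInf CA with hκ
  set μ := sInf CB with hμ
  obtain ⟨S, hS, hScard⟩ : κ ∈ CA := csInf_mem hCAne
  obtain ⟨T, hT, hTcard⟩ : μ ∈ CB := csInf_mem hCBne
  -- minimality
  have hminA : ∀ X : Set G, X ⊆ Iio one → #X < κ → ∃ z, z < one ∧ ∀ s ∈ X, s < z := by
    intro X hX hXκ
    by_contra hc
    push_neg at hc
    have : #X ∈ CA := ⟨X, ⟨hX, fun x hx => by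
      obtain ⟨s, hs, hsx⟩ := hc x hx
      exact ⟨s, hs, hsx⟩⟩, rfl⟩
    exact absurd (csInf_le' this) (not_le.mpr hXκ)
  have hminB : ∀ X : Set G, X ⊆ Ioi one → #X < μ → ∃ z, one < z ∧ ∀ s ∈ X, z < s := by
    intro X hX hXμ
    by_contra hc
    push_neg at hc
    have : #X ∈ CB := ⟨X, ⟨hX, fun x hx => by
      obtain ⟨s, hs, hsx⟩ := hc x hx
      exact ⟨s, hs, hsx⟩⟩, rfl⟩
    exact absurd (csInf_le' this) (not_le.mpr hXμ)
  -- the two sides have the same cofinality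
  have hμκ : ¬ μ < κ := by
    intro hlt
    have hchoice : ∀ t : T, ∃ p, p < one ∧ ∀ a, p < a → a < one → one < op a t :=
      fun t => Hyp2 t (hT.1 t.2) a₀ ha₀
    choose p hp1 hp2 using hchoice
    have hXcard : #(Set.range p) < κ := lt_of_le_of_lt (mk_range_le.trans_eq hTcard) hlt
    obtain ⟨z, hz1, hz2⟩ := hminA (Set.range p) (fun x ⟨t, ht⟩ => ht ▸ hp1 t) hXcard
    obtain ⟨q, hq1, hq2⟩ := Hyp1 z hz1 b₀ hb₀
    obtain ⟨y, hy1, hy2⟩ := hBmin q hq1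
    obtain ⟨t, htT, hty⟩ := hT.2 y hy1
    have h1 : one < op z t := hp2 ⟨t, htT⟩ z (hz2 _ ⟨⟨t, htT⟩, rfl⟩) hz1
    have h2 : op z t < one := hq2 t (hT.1 htT) (lt_of_le_of_lt hty hy2)
    exact absurd h1 (not_lt.mpr h2.le)
  have hκμ : ¬ κ < μ := by
    intro hlt
    have hchoice : ∀ s : S, ∃ q, one < q ∧ ∀ b, one < b → b < q → op s b < one :=
      fun s => Hyp1 s (hS.1 s.2) b₀ hb₀
    choose q hq1 hq2 using hchoice
    have hXcard : #(Set.range q) < μ := lt_of_le_of_lt (mk_range_le.trans_eq hScard) hlt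
    obtain ⟨z, hz1, hz2⟩ := hminB (Set.range q) (fun x ⟨s, hs⟩ => hs ▸ hq1 s) hXcard
    obtain ⟨w, hw1, hw2⟩ := Hyp2 z hz1 a₀ ha₀
    obtain ⟨y, hy1, hy2⟩ := hAmax w hw1
    obtain ⟨s, hsS, hsy⟩ := hS.2 y hy1
    have h1 : op s z < one := hq2 ⟨s, hsS⟩ z hz1 (hz2 _ ⟨⟨s, hsS⟩, rfl⟩)
    have h2 : one < op s z := hw2 s (lt_of_lt_of_le hy2 hsy) (hS.1 hsS)
    exact absurd h2 (not_lt.mpr h1.le)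
  have hκμeq : κ = μ := le_antisymm (not_lt.mp hμκ) (not_lt.mp hκμ)
  -- enumerations of `S` and `T` by `κ.ord.toType`
  have heS : #(κ.ord.ToType) = #S := by rw [mk_ord_toType, hScard]
  have heT : #(κ.ord.ToType) = #T := by rw [mk_ord_toType, hκμeq, hTcard]
  obtain ⟨e⟩ := Cardinal.eq.mp heS
  obtain ⟨f⟩ := Cardinal.eq.mp heT
  set ι := κ.ord.ToType
  -- canonical nested neighborhoods
  set UB : ι → Set G := fun i => {x | x < one ∧ ∀ j : ι, j ≤ i → (e j : G) ≤ x} with hUB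
  set LB : ι → Set G := fun i => {y | one < y ∧ ∀ j : ι, j ≤ i → y ≤ (f j : G)} with hLB
  set N : ι → Set G := fun i => (⋃ x ∈ UB i, Ioi x) ∩ ⋃ y ∈ LB i, Iio y with hN
  have hUBne : ∀ i, (UB i).Nonempty := by
    intro i
    have hXcard : #(Set.range fun j : Iio i => (e j.1 : G)) < κ :=
      lt_of_le_of_lt mk_range_le (mk_Iio_ord_toType i)
    obtain ⟨z, hz1, hz2⟩ := hminA _ (by rintro x ⟨j, rfl⟩; exact hS.1 (e j.1).2) hXcard
    refine ⟨max z (e i), max_lt hz1 (hS.1 (e i).2), fun j hj => ?_⟩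
    rcases lt_or_eq_of_le hj with hj' | hj'
    · exact le_trans (hz2 _ ⟨⟨j, hj'⟩, rfl⟩).le (le_max_left _ _)
    · rw [hj']; exact le_max_right _ _
  have hLBne : ∀ i, (LB i).Nonempty := by
    intro i
    have hXcard : #(Set.range fun j : Iio i => (f j.1 : G)) < μ :=
      lt_of_le_of_lt mk_range_le (hκμeq ▸ mk_Iio_ord_toType i)
    obtain ⟨z, hz1, hz2⟩ := hminB _ (by rintro x ⟨j, rfl⟩; exact hT.1 (f j.1).2) hXcard
    refine ⟨min z (f i), lt_min hz1 (hT.1 (f i).2), fun j hj => ?_⟩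
    rcases lt_or_eq_of_le hj with hj' | hj'
    · exact le_trans (min_le_left _ _) (hz2 _ ⟨⟨j, hj'⟩, rfl⟩).le
    · rw [hj']; exact min_le_right _ _
  have hNnhds : ∀ i, N i ∈ nhds one := by
    intro i
    obtain ⟨x, hx⟩ := hUBne i
    obtain ⟨y, hy⟩ := hLBne i
    have hopen : IsOpen (N i) :=
      ((isOpen_biUnion fun _ _ => isOpen_Ioi).inter (isOpen_biUnion fun _ _ => isOpen_Iio))
    refine hopen.mem_nhds ⟨?_, ?_⟩
    · exact Set.mem_biUnion hx hx.1
    · exact Set.mem_biUnion hy hy.1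
  have hNmono : ∀ i j : ι, i ≤ j → N j ⊆ N i := by
    intro i j hij z hz
    obtain ⟨hz1, hz2⟩ := hz
    obtain ⟨x, hxUB, hzx⟩ := Set.mem_iUnion₂.mp hz1
    obtain ⟨y, hyLB, hzy⟩ := Set.mem_iUnion₂.mp hz2
    constructor
    · exact Set.mem_biUnion ⟨hxUB.1, fun k hk => hxUB.2 k (hk.trans hij)⟩ hzx
    · exact Set.mem_biUnion ⟨hyLB.1, fun k hk => hyLB.2 k (hk.trans hij)⟩ hzy
  refine ⟨Set.range N, ?_, ?_, ?_⟩
  · rintro I ⟨i, rfl⟩; exact hNnhds i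
  · intro V hV
    obtain ⟨l, r, ⟨hl, hr⟩, hsub⟩ :=
      (mem_nhds_iff_exists_Ioo_subset' ⟨a₀, ha₀⟩ ⟨b₀, hb₀⟩).mp hV
    obtain ⟨s, hsS, hls⟩ := hS.2 l hl
    obtain ⟨t, htT, htr⟩ := hT.2 r hr
    set i : ι := max (e.symm ⟨s, hsS⟩) (f.symm ⟨t, htT⟩) with hi
    refine ⟨N i, ⟨i, rfl⟩, fun z hz => hsub ?_⟩
    obtain ⟨hz1, hz2⟩ := hz
    obtain ⟨x, hxUB, hzx⟩ := Set.mem_iUnion₂.mp hz1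
    obtain ⟨y, hyLB, hzy⟩ := Set.mem_iUnion₂.mp hz2
    have hsx : s ≤ x := by
      have h := hxUB.2 (e.symm ⟨s, hsS⟩) (le_max_left _ _)
      rwa [Equiv.apply_symm_apply] at h
    have hyt : y ≤ t := by
      have h := hyLB.2 (f.symm ⟨t, htT⟩) (le_max_right _ _)
      rwa [Equiv.apply_symm_apply] at h
    exact ⟨lt_of_le_of_lt (hls.trans hsx) hzx, lt_of_lt_of_le hzy (hyt.trans htr)⟩
  · rintro I ⟨i, rfl⟩ J ⟨j, rfl⟩
    rcases le_total i j with h | h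
    · exact Or.inr (hNmono i j h)
    · exact Or.inl (hNmono j i h)

theorem exists_chain_base {G : Type u} [LinearOrder G] [TopologicalSpace G] [OrderTopology G]
    (one : G) (op : G → G → G)
    (Hyp1 : ∀ a, a < one → ∀ b0, one < b0 → ∃ q, one < q ∧ ∀ b, one < b → b < q → op a b < one)
    (Hyp2 : ∀ b, one < b → ∀ a0, a0 < one → ∃ p, p < one ∧ ∀ a, p < a → a < one → one < op a b) :
    ∃ ℬ : Set (Set G), (∀ I ∈ ℬ, I ∈ nhds one) ∧ (∀ V ∈ nhds one, ∃ I ∈ ℬ, I ⊆ V) ∧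
      (∀ I ∈ ℬ, ∀ J ∈ ℬ, I ⊆ J ∨ J ⊆ I) := by
  by_cases hA : ∃ a : G, a < one
  · by_cases hB : ∃ b : G, one < b
    · by_cases hAmax : ∃ a0, a0 < one ∧ ∀ y, y < one → y ≤ a0
      · -- left side has a maximum `a0` : use `Ioo a0 b`, `b > one`
        obtain ⟨a0, ha0, ha0max⟩ := hAmax
        refine ⟨{I | ∃ b, one < b ∧ I = Ioo a0 b}, ?_, ?_, ?_⟩
        · rintro I ⟨b, hb, rfl⟩
          exact Ioo_mem_nhds ha0 hb
        · intro V hV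
          obtain ⟨u, hu, huV⟩ := exists_Ico_subset_of_mem_nhds hV hB
          refine ⟨Ioo a0 u, ⟨u, hu, rfl⟩, fun x hx => huV ?_⟩
          have h1x : one ≤ x := by
            by_contra hc
            exact absurd (ha0max x (lt_of_not_ge hc)) (not_le.mpr hx.1)
          exact ⟨h1x, hx.2⟩
        · rintro I ⟨b, hb, rfl⟩ J ⟨b', hb', rfl⟩
          rcases le_total b b' with h | h
          · exact Or.inl (Ioo_subset_Ioo_right h)
          · exact Or.inr (Ioo_subset_Ioo_right h)
      · by_cases hBmin : ∃ b0, one < b0 ∧ ∀ y, one < y → b0 ≤ y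
        · obtain ⟨b0, hb0, hb0min⟩ := hBmin
          refine ⟨{I | ∃ a, a < one ∧ I = Ioo a b0}, ?_, ?_, ?_⟩
          · rintro I ⟨a, ha, rfl⟩
            exact Ioo_mem_nhds ha hb0
          · intro V hV
            obtain ⟨l, hl, hlV⟩ := exists_Ioc_subset_of_mem_nhds hV hA
            refine ⟨Ioo l b0, ⟨l, hl, rfl⟩, fun x hx => hlV ?_⟩
            have h1x : x ≤ one := by
              by_contra hc
              exact absurd (hb0min x (lt_of_not_ge hc)) (not_le.mpr hx.2)
            exact ⟨hx.1, h1x⟩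
          · rintro I ⟨a, ha, rfl⟩ J ⟨a', ha', rfl⟩
            rcases le_total a a' with h | h
            · exact Or.inr (Ioo_subset_Ioo_left h)
            · exact Or.inl (Ioo_subset_Ioo_left h)
        · -- hard case : both sides nonempty, no max on the left, no min on the right
          push_neg at hAmax hBmin
          obtain ⟨a₀, ha₀⟩ := hA
          obtain ⟨b₀, hb₀⟩ := hB
          exact hard_case one op Hyp1 Hyp2 a₀ ha₀ b₀ hb₀
            (fun a0 ha0 => hAmax a0 ha0) (fun b0 hb0 => hBmin b0 hb0)
    · -- right side empty : use `Ioi a`, `a < one`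
      push_neg at hB
      refine ⟨{I | ∃ a, a < one ∧ I = Ioi a}, ?_, ?_, ?_⟩
      · rintro I ⟨a, ha, rfl⟩
        exact Ioi_mem_nhds ha
      · intro V hV
        obtain ⟨l, hl, hlV⟩ := exists_Ioc_subset_of_mem_nhds hV hA
        exact ⟨Ioi l, ⟨l, hl, rfl⟩, fun x hx => hlV ⟨hx, hB x⟩⟩
      · rintro I ⟨a, ha, rfl⟩ J ⟨a', ha', rfl⟩
        rcases le_total a a' with h | h
        · exact Or.inr (Ioi_subset_Ioi h)
        · exact Or.inl (Ioi_subset_Ioi h)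
  · by_cases hB : ∃ b : G, one < b
    · push_neg at hA
      refine ⟨{I | ∃ b, one < b ∧ I = Iio b}, ?_, ?_, ?_⟩
      · rintro I ⟨b, hb, rfl⟩
        exact Iio_mem_nhds hb
      · intro V hV
        obtain ⟨u, hu, huV⟩ := exists_Ico_subset_of_mem_nhds hV hB
        exact ⟨Iio u, ⟨u, hu, rfl⟩, fun x hx => huV ⟨hA x, hx⟩⟩
      · rintro I ⟨b, hb, rfl⟩ J ⟨b', hb', rfl⟩
        rcases le_total b b' with h | h
        · exact Or.inl (Iio_subset_Iio h)
        · exact Or.inr (Iio_subset_Iio h)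
    · -- G = {one}
      push_neg at hA; push_neg at hB
      have hsingle : ∀ x : G, x = one := fun x => le_antisymm (hB x) (hA x)
      refine ⟨{Set.univ}, ?_, ?_, ?_⟩
      · rintro I rfl; exact Filter.univ_mem
      · intro V hV
        refine ⟨Set.univ, rfl, fun x _ => ?_⟩
        rw [hsingle x]
        exact mem_of_mem_nhds hV
      · rintro I rfl J rfl; exact Or.inl le_rfl

end GyroChainAux

/-- A strongly topologically orderable gyrogroup has a totally ordered local base at
the identity consisting of symmetric, gyr-invariant neighborhoods. -/
theorem stmt8 {G : Type u} [Gyrogroup G] [TopologicalSpace G]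
    (h : StronglyTopologicallyOrderable G) :
    ∃ 𝒱 : Set (Set G), (∀ W ∈ 𝒱, W ∈ nhds (one : G)) ∧
      (∀ V ∈ nhds (one : G), ∃ W ∈ 𝒱, W ⊆ V) ∧
      (∀ W ∈ 𝒱, ∀ W' ∈ 𝒱, W ⊆ W' ∨ W' ⊆ W) ∧
      (∀ W ∈ 𝒱, (inv : G → G) '' W = W) ∧
      (∀ W ∈ 𝒱, ∀ x y : G, (gyr x y) '' W = W) := by
  classical
  obtain ⟨⟨⟨hopc, hinvc⟩, 𝒰, h𝒰n, h𝒰b, h𝒰g⟩, l, htop⟩ := h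
  letI := l
  haveI hOT : OrderTopology G := ⟨htop⟩
  have Hyp1 : ∀ a : G, a < one → ∀ b0 : G, one < b0 →
      ∃ q, one < q ∧ ∀ b, one < b → b < q → op a b < one := by
    intro a ha b0 hb0
    have hcont : Continuous fun b : G => op a b :=
      hopc.comp (continuous_const.prodMk continuous_id)
    have hmem : (fun b : G => op a b) ⁻¹' (Iio one) ∈ nhds (one : G) := by
      apply hcont.continuousAt.preimage_mem_nhds
      rw [op_one]
      exact Iio_mem_nhds ha
    obtain ⟨l', u', ⟨hl', hu'⟩, hsub⟩ :=
      (mem_nhds_iff_exists_Ioo_subset' ⟨a, ha⟩ ⟨b0, hb0⟩).mp hmem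
    exact ⟨u', hu', fun b h1b hbu => hsub ⟨lt_trans hl' h1b, hbu⟩⟩
  have Hyp2 : ∀ b : G, one < b → ∀ a0 : G, a0 < one →
      ∃ p, p < one ∧ ∀ a, p < a → a < one → one < op a b := by
    intro b hb a0 ha0
    have hcont : Continuous fun a : G => op a b :=
      hopc.comp (continuous_id.prodMk continuous_const)
    have hmem : (fun a : G => op a b) ⁻¹' (Ioi one) ∈ nhds (one : G) := by
      apply hcont.continuousAt.preimage_mem_nhds
      rw [one_op]
      exact Ioi_mem_nhds hb
    obtain ⟨l', u', ⟨hl', hu'⟩, hsub⟩ :=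
      (mem_nhds_iff_exists_Ioo_subset' ⟨a0, ha0⟩ ⟨b, hb⟩).mp hmem
    exact ⟨l', hl', fun a hpa ha1 => hsub ⟨hpa, lt_trans ha1 hu'⟩⟩
  obtain ⟨ℬ, hB1, hB2, hB3⟩ := GyroChainAux.exists_chain_base (one : G) op Hyp1 Hyp2
  -- the symmetric gyr-invariant "hull" of a neighborhood
  set Wfam : Set G → Set (Set G) := fun I =>
    {V | V ∈ nhds (one : G) ∧ (inv : G → G) '' V = V ∧
      (∀ x y : G, (gyr x y) '' V = V) ∧ V ⊆ I} with hWfam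
  set Whull : Set G → Set G := fun I => ⋃₀ Wfam I with hWhull
  have hWmem : ∀ I ∈ nhds (one : G), ∃ V, V ∈ Wfam I := by
    intro I hI
    obtain ⟨U, hU𝒰, hUI⟩ := h𝒰b I hI
    have hUn : U ∈ nhds (one : G) := h𝒰n U hU𝒰
    have hinvU : (inv : G → G) '' U ∈ nhds (one : G) := by
      rw [Gyrogroup.inv_image_eq_preimage]
      apply hinvc.continuousAt.preimage_mem_nhds
      rw [Gyrogroup.inv_one]
      exact hUn
    refine ⟨U ∩ (inv : G → G) '' U,
      Filter.inter_mem hUn hinvU, ?_, ?_, inter_subset_left.trans hUI⟩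
    · have hinv2 : (inv : G → G) ⁻¹' ((inv : G → G) ⁻¹' U) = U := by
        ext x; simp [Gyrogroup.inv_inv]
      rw [Gyrogroup.inv_image_eq_preimage, Gyrogroup.inv_image_eq_preimage,
        Set.preimage_inter, hinv2, Set.inter_comm]
    · intro x y
      rw [Set.image_inter (gyr x y).injective, h𝒰g U hU𝒰 x y,
        Gyrogroup.gyr_image_inv, h𝒰g U hU𝒰 x y]
  have hWnhds : ∀ I ∈ nhds (one : G), Whull I ∈ nhds (one : G) := by
    intro I hI
    obtain ⟨V, hV⟩ := hWmem I hI
    exact Filter.mem_of_superset hV.1 (Set.subset_sUnion_of_mem hV)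
  have hWsub : ∀ I, Whull I ⊆ I := fun I => Set.sUnion_subset fun V hV => hV.2.2.2
  have hWmono : ∀ I J : Set G, I ⊆ J → Whull I ⊆ Whull J := by
    intro I J hIJ
    exact Set.sUnion_subset_sUnion fun V hV => ⟨hV.1, hV.2.1, hV.2.2.1, hV.2.2.2.trans hIJ⟩
  have hWsymm : ∀ I, (inv : G → G) '' Whull I = Whull I := by
    intro I
    apply Set.Subset.antisymm
    · rintro _ ⟨v, hvW, rfl⟩
      obtain ⟨V, hVfam, hvV⟩ := hvW
      have h1 : inv v ∈ (inv : G → G) '' V := Set.mem_image_of_mem _ hvV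
      rw [hVfam.2.1] at h1
      exact ⟨V, hVfam, h1⟩
    · intro v hv
      obtain ⟨V, hVfam, hvV⟩ := hv
      have h1 : v ∈ (inv : G → G) '' V := by rw [hVfam.2.1]; exact hvV
      obtain ⟨w, hw, rfl⟩ := h1
      exact Set.mem_image_of_mem _ ⟨V, hVfam, hw⟩
  have hWgyr : ∀ I, ∀ x y : G, (gyr x y) '' Whull I = Whull I := by
    intro I x y
    apply Set.Subset.antisymm
    · rintro _ ⟨v, hvW, rfl⟩
      obtain ⟨V, hVfam, hvV⟩ := hvW
      have h1 : (gyr x y) v ∈ (gyr x y) '' V := Set.mem_image_of_mem _ hvV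
      rw [hVfam.2.2.1 x y] at h1
      exact ⟨V, hVfam, h1⟩
    · intro v hv
      obtain ⟨V, hVfam, hvV⟩ := hv
      have h1 : v ∈ (gyr x y) '' V := by rw [hVfam.2.2.1 x y]; exact hvV
      obtain ⟨w, hw, rfl⟩ := h1
      exact Set.mem_image_of_mem _ ⟨V, hVfam, hw⟩
  refine ⟨Whull '' ℬ, ?_, ?_, ?_, ?_, ?_⟩
  · rintro W ⟨I, hI, rfl⟩
    exact hWnhds I (hB1 I hI)
  · intro V hV
    obtain ⟨I, hIB, hIV⟩ := hB2 V hV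
    exact ⟨Whull I, Set.mem_image_of_mem _ hIB, (hWsub I).trans hIV⟩
  · rintro W ⟨I, hI, rfl⟩ W' ⟨I', hI', rfl⟩
    rcases hB3 I hI I' hI' with hss | hss
    · exact Or.inl (hWmono _ _ hss)
    · exact Or.inr (hWmono _ _ hss)
  · rintro W ⟨I, hI, rfl⟩
    exact hWsymm I
  · rintro W ⟨I, hI, rfl⟩
    exact hWgyr I
end
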